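/- Let f_x : ℝ → ℝ and f_z : ℝ → ℝ each be concave on [0,∞) and nonincreasing on [0,∞), and let d₁ > 0 and d₂ > 0 be real numbers. Then at least one of the following holds: 2·f_x(d₁) ≥ f_x(0) + f_x(d₁+d₂), or 2·f_z(d₂) ≥ f_z(0) + f_z(d₁+d₂). -/

import Mathlib

lemma aux_median (f : ℝ → ℝ)
    (hconc : ConcaveOn ℝ (Set.Ici (0 : ℝ)) f)
    (hanti : AntitoneOn f (Set.Ici (0 : ℝ)))
    (a b : ℝ) (ha : 0 < a) (hb : 0 < b) (hab : a ≤ b) :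
    2 * f a ≥ f 0 + f (a + b) := by
  have hs : 0 < a + b := by linarith
  set t : ℝ := b / (a + b) with ht
  have ht0 : 0 ≤ t := by positivity
  have ht1 : 1 - t = a / (a + b) := by rw [ht]; field_simp; ring
  have ht1' : 0 ≤ 1 - t := by rw [ht1]; positivity
  have hkey : f (t • (0:ℝ) + (1 - t) • (a + b)) ≥ t • f 0 + (1 - t) • f (a + b) :=
    hconc.2 (Set.mem_Ici.2 le_rfl) (Set.mem_Ici.2 hs.le) ht0 ht1' (by ring)
  have hpt : t • (0:ℝ) + (1 - t) • (a + b) = a := by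
    simp only [smul_eq_mul, mul_zero, zero_add, ht1]
    field_simp
  rw [hpt] at hkey
  simp only [smul_eq_mul] at hkey
  have hmono : f (a + b) ≤ f 0 :=
    hanti (Set.mem_Ici.2 le_rfl) (Set.mem_Ici.2 hs.le) hs.le
  have htt : (1:ℝ)/2 ≤ t := by
    rw [ht, div_le_div_iff₀ (by norm_num) hs]; linarith
  nlinarith [mul_le_mul_of_nonneg_left hmono (by linarith : (0:ℝ) ≤ 2*t - 1)]

theorem one_side_prefers_median_win
    (fx fz : ℝ → ℝ)
    (hfx_conc : ConcaveOn ℝ (Set.Ici (0 : ℝ)) fx)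
    (hfx_anti : AntitoneOn fx (Set.Ici (0 : ℝ)))
    (hfz_conc : ConcaveOn ℝ (Set.Ici (0 : ℝ)) fz)
    (hfz_anti : AntitoneOn fz (Set.Ici (0 : ℝ)))
    (d₁ d₂ : ℝ) (hd₁ : 0 < d₁) (hd₂ : 0 < d₂) :
    2 * fx d₁ ≥ fx 0 + fx (d₁ + d₂) ∨ 2 * fz d₂ ≥ fz 0 + fz (d₁ + d₂) := by
  rcases le_total d₁ d₂ with h | h
  · exact Or.inl (aux_median fx hfx_conc hfx_anti d₁ d₂ hd₁ hd₂ h)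
  · have := aux_median fz hfz_conc hfz_anti d₂ d₁ hd₂ hd₁ h
    rw [add_comm d₂ d₁] at this
    exact Or.inr this
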